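/- Let f : [0,∞) → ℝ be continuous, increasing, with f(0)=0, f(∞)=1. Suppose ã solves ã'' - (1/r)ã' + β² f²(1-ã) = 0 on (0,∞) with ã(0)=0, and 0 < ã(r) < 1, ã'(r) ≥ 0 for all r > 0. Then ã'(r) > 0 for all r > 0 (ã is strictly increasing). -/

import Mathlib

open Filter Set

/-- Strict monotonicity of the gauge profile: if `f` is continuous, increasing,
`f(0) = 0`, `f(∞) = 1`, and `ã` solves `ã'' - (1/r) ã' + β² f² (1 - ã) = 0` on
`(0,∞)` with `ã(0) = 0`, `0 < ã < 1` and `ã' ≥ 0`, then `ã' > 0` on `(0,∞)`. -/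
theorem stmt15 (β : ℝ) (hβ : β > 0) (f a : ℝ → ℝ)
    (hf : ContinuousOn f (Ici 0)) (hfmono : MonotoneOn f (Ici 0))
    (hf0 : f 0 = 0) (hflim : Tendsto f atTop (nhds 1))
    (haC : ContinuousOn a (Ici 0)) (ha2 : ContDiffOn ℝ 2 a (Ioi 0))
    (hode : ∀ r ∈ Ioi (0:ℝ),
      deriv (deriv a) r - (1 / r) * deriv a r + β ^ 2 * (f r) ^ 2 * (1 - a r) = 0)
    (ha0 : a 0 = 0)
    (hbd : ∀ r ∈ Ioi (0:ℝ), 0 < a r ∧ a r < 1)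
    (hmono : ∀ r ∈ Ioi (0:ℝ), 0 ≤ deriv a r) :
    ∀ r ∈ Ioi (0:ℝ), 0 < deriv a r := by
  have hopen : IsOpen (Ioi (0:ℝ)) := isOpen_Ioi
  have hda : ContDiffOn ℝ 1 (deriv a) (Ioi 0) :=
    ha2.deriv_of_isOpen hopen (by norm_num)
  have hdaC : ContinuousOn (deriv a) (Ioi 0) := hda.continuousOn
  have hdaD : DifferentiableOn ℝ (deriv a) (Ioi 0) :=
    hda.differentiableOn (by norm_num)
  have haD : DifferentiableOn ℝ a (Ioi 0) := ha2.differentiableOn (by norm_num)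
  intro r hr
  by_contra h
  have hr0 : deriv a r = 0 := le_antisymm (not_lt.1 h) (hmono r hr)
  have hlm : IsLocalMin (deriv a) r := by
    filter_upwards [hopen.mem_nhds hr] with x hx
    rw [hr0]; exact hmono x hx
  have hdd : deriv (deriv a) r = 0 := hlm.deriv_eq_zero
  -- `f r = 0`
  have hfr : f r = 0 := by
    have hd := hode r hr
    rw [hdd, hr0] at hd
    have h1 : (0:ℝ) < 1 - a r := by linarith [(hbd r hr).2]
    have hβ2 : (0:ℝ) < β ^ 2 := by positivity
    have hsq : f r ^ 2 = 0 := by nlinarith [sq_nonneg (f r), mul_pos hβ2 h1]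
    exact pow_eq_zero_iff two_ne_zero |>.1 hsq
  have hfz : ∀ s ∈ Icc (0:ℝ) r, f s = 0 := by
    intro s hs
    have h1 : f s ≤ f r := hfmono hs.1 (Set.mem_Ici.2 (le_of_lt hr)) hs.2
    have h2 : f 0 ≤ f s := hfmono (Set.mem_Ici.2 le_rfl) hs.1 hs.1
    rw [hf0] at h2; rw [hfr] at h1; linarith
  -- second derivative nonneg on (0, r)
  have hdd0 : ∀ x ∈ Ioo (0:ℝ) r, 0 ≤ deriv (deriv a) x := by
    intro x hx
    have hxI : x ∈ Ioi (0:ℝ) := hx.1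
    have hx0 : (0:ℝ) < x := hx.1
    have hd := hode x hxI
    rw [hfz x ⟨le_of_lt hx.1, le_of_lt hx.2⟩] at hd
    have h1 : (0:ℝ) < 1 / x := by positivity
    have := hmono x hxI
    nlinarith
  -- deriv a = 0 on Ioc 0 r
  have hder0 : ∀ s ∈ Ioc (0:ℝ) r, deriv a s = 0 := by
    intro s hs
    rcases eq_or_lt_of_le hs.2 with heq | hlt
    · rw [heq, hr0]
    have hIcc : Icc s r ⊆ Ioi (0:ℝ) := fun x hx => lt_of_lt_of_le hs.1 hx.1
    have hmon : MonotoneOn (deriv a) (Icc s r) := by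
      apply monotoneOn_of_deriv_nonneg (convex_Icc s r) (hdaC.mono hIcc)
      · rw [interior_Icc]
        exact hdaD.mono (fun y hy => lt_trans hs.1 hy.1)
      · intro x hx
        rw [interior_Icc] at hx
        exact hdd0 x ⟨lt_trans hs.1 hx.1, hx.2⟩
    have h1 : deriv a s ≤ deriv a r :=
      hmon ⟨le_rfl, hs.2⟩ ⟨hs.2, le_rfl⟩ hs.2
    have h2 : 0 ≤ deriv a s := hmono s hs.1
    rw [hr0] at h1; linarith
  -- a constant on Ioc 0 r
  have hconst : ∀ s ∈ Ioc (0:ℝ) r, a s = a r := by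
    intro s hs
    have hIcc : Icc s r ⊆ Ioi (0:ℝ) := fun x hx => lt_of_lt_of_le hs.1 hx.1
    have hIccI : Icc s r ⊆ Ici (0:ℝ) := fun x hx => Set.mem_Ici.2 (le_of_lt (hIcc hx))
    have haDloc : DifferentiableOn ℝ a (interior (Icc s r)) := by
      rw [interior_Icc]
      exact haD.mono fun x hx => lt_of_lt_of_le hs.1 (le_of_lt hx.1)
    have hz : ∀ x ∈ interior (Icc s r), deriv a x = 0 := by
      rw [interior_Icc]
      intro x hx
      exact hder0 x ⟨lt_trans hs.1 hx.1, le_of_lt hx.2⟩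
    have hmon : MonotoneOn a (Icc s r) :=
      monotoneOn_of_deriv_nonneg (convex_Icc s r) (haC.mono hIccI) haDloc
        (fun x hx => (hz x hx).ge)
    have hant : AntitoneOn a (Icc s r) :=
      antitoneOn_of_deriv_nonpos (convex_Icc s r) (haC.mono hIccI) haDloc
        (fun x hx => (hz x hx).le)
    exact le_antisymm (hmon ⟨le_rfl, hs.2⟩ ⟨hs.2, le_rfl⟩ hs.2)
      (hant ⟨le_rfl, hs.2⟩ ⟨hs.2, le_rfl⟩ hs.2)
  -- limit at 0 gives a r = 0, contradiction
  have hten0 : Tendsto a (nhdsWithin 0 (Ioi 0)) (nhds 0) := by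
    have := (haC 0 self_mem_Ici).tendsto
    rw [ha0] at this
    exact this.mono_left (nhdsWithin_mono 0 Ioi_subset_Ici_self)
  have htenc : Tendsto a (nhdsWithin 0 (Ioi 0)) (nhds (a r)) := by
    refine Tendsto.congr' ?_ tendsto_const_nhds
    filter_upwards [Ioc_mem_nhdsGT_of_mem ⟨le_rfl, hr⟩] with x hx
    exact (hconst x hx).symm
  have : (0:ℝ) = a r := tendsto_nhds_unique hten0 htenc
  exact absurd this.symm (ne_of_gt (hbd r hr).1)
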